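/- Let A₁,…,A_{n+2} be points in ℝⁿ in general position and α₁,…,α_{n+2} nonzero reals with Σᵢ αᵢ = 0 and Σᵢ αᵢAᵢ = 0. Let B be the (n+1)×n real matrix whose i-th row is the vector Aᵢ − A_{n+2} (for 1 ≤ i ≤ n+1), and let D be the (n+1)×(n+1) diagonal matrix with diagonal entries α₁,…,α_{n+1}. Define c₀ := 1 and c_k := Σ_{1≤i₁<⋯<i_k≤n+2} α_{i₁}⋯α_{i_k} det(⟨A_{i_a} − P, A_{i_b} − Q⟩)_{1≤a,b≤k} for any choice of P, Q (this is independent of P, Q), and set f(x) := Σ_{i=0}^{n} (−1)^i c_i x^{n−i}. Then the characteristic polynomial of the n×n matrix BᵀDB is f(x), and the characteristic polynomial of the (n+1)×(n+1) matrix BBᵀD is x·f(x) (characteristic polynomial of M meaning det(x·I − M)). -/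

import Mathlib

open Polynomial Matrix

/-- Points `A₁, …, A_m` in `ℝ^d` are in general position if every `d+1` of them are
affinely independent. -/
def InGeneralPosition {d m : ℕ} (A : Fin m → EuclideanSpace ℝ (Fin d)) : Prop :=
  ∀ s : Finset (Fin m), s.card = d + 1 → AffineIndependent ℝ (fun i : ↥s => A i.1)

/-- `c_k = Σ_{i₁<⋯<i_k} α_{i₁}⋯α_{i_k} det(⟨A_{i_a} − P, A_{i_b} − Q⟩)_{a,b}` taken with
`P = Q = 0` (by Lemma 2.3 this quantity is independent of `P` and `Q`); `c₀ = 1`. -/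
noncomputable def cCoeff {d m : ℕ} (A : Fin m → EuclideanSpace ℝ (Fin d))
    (α : Fin m → ℝ) (k : ℕ) : ℝ :=
  ∑ s ∈ Finset.powersetCard k (Finset.univ : Finset (Fin m)),
    (∏ i ∈ s, α i) *
      Matrix.det (Matrix.of fun (a b : ↥s) => (inner ℝ (A a.1) (A b.1) : ℝ))

/-- The characteristic polynomial of the configuration:
`f(x) = c₀xⁿ − c₁x^{n−1} + ⋯ + (−1)ⁿc_n`. -/
noncomputable def charPolyConfig {d m : ℕ} (A : Fin m → EuclideanSpace ℝ (Fin d))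
    (α : Fin m → ℝ) (n : ℕ) : Polynomial ℝ :=
  ∑ i ∈ Finset.range (n + 1), C ((-1 : ℝ) ^ i * cCoeff A α i) * X ^ (n - i)



variable {ι : Type*} [Fintype ι] [DecidableEq ι] {R : Type*} [CommRing R]

/-- det of a matrix whose rows in `s` are identity rows equals the complementary minor. -/
lemma det_ite_identity_rows (s : Finset ι) (M : Matrix ι ι R) :
    Matrix.det (Matrix.of fun i j => if i ∈ s then (if i = j then (1:R) else 0) else M i j)
      = Matrix.det (M.submatrix (fun i : {x // ¬ x ∈ s} => (i : ι)) (fun i : {x // ¬ x ∈ s} => (i : ι))) := by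
  classical
  set M₀ : Matrix ι ι R := Matrix.of fun i j => if i ∈ s then (if i = j then (1:R) else 0) else M i j with hM₀
  let e : {x // x ∈ s} ⊕ {x // ¬ x ∈ s} ≃ ι := Equiv.sumCompl _
  rw [← Matrix.det_submatrix_equiv_self e M₀]
  have : M₀.submatrix e e = Matrix.fromBlocks 1 0
      (M.submatrix (fun i : {x // ¬ x ∈ s} => (i : ι)) (fun i : {x // x ∈ s} => (i : ι)))
      (M.submatrix (fun i : {x // ¬ x ∈ s} => (i : ι)) (fun i : {x // ¬ x ∈ s} => (i : ι))) := by
    ext (a | a) (b | b) <;>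
      simp only [Matrix.submatrix_apply, hM₀, Matrix.of_apply, Matrix.fromBlocks_apply₁₁,
        Matrix.fromBlocks_apply₁₂, Matrix.fromBlocks_apply₂₁, Matrix.fromBlocks_apply₂₂, e,
        Equiv.sumCompl_apply_inl, Equiv.sumCompl_apply_inr]
    · simp only [a.2, if_true, Matrix.one_apply]
      congr 1
      exact propext ⟨fun h => Subtype.ext h, fun h => congrArg Subtype.val h⟩
    · simp only [a.2, if_true, Matrix.zero_apply]
      have : ¬ ((a : ι) = (b : ι)) := fun h => b.2 (h ▸ a.2)
      simp [this]
    · simp [a.2]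
    · simp [a.2]
  rw [this, Matrix.det_fromBlocks_zero₁₂, Matrix.det_one, one_mul]

lemma charpoly_eq_sum_minors (M : Matrix ι ι R) :
    M.charpoly = ∑ t : Finset ι,
      (C ((-1:R) ^ t.card * (M.submatrix (fun i : ↥t => (i : ι)) (fun i : ↥t => (i : ι))).det))
        * X ^ (Fintype.card ι - t.card) := by
  classical
  -- rows of charmatrix
  set a : ι → ι → R[X] := fun i j => if i = j then X else 0 with ha
  set b : ι → ι → R[X] := fun i j => -C (M i j) with hb
  have hrows : charmatrix M = Matrix.of (a + b) := by
    ext i j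
    by_cases h : i = j <;> simp [h, a, b, charmatrix_apply, Matrix.diagonal_apply, sub_eq_add_neg]
  have hdet : M.charpoly = Matrix.detRowAlternating (a + b) := by
    rw [Matrix.charpoly, hrows]; rfl
  rw [hdet, ← AlternatingMap.coe_multilinearMap,
    (Matrix.detRowAlternating (R := R[X]) (n := ι)).toMultilinearMap.map_add_univ a b]
  -- evaluate each piecewise term
  have hterm : ∀ s : Finset ι,
      (Matrix.detRowAlternating (R := R[X]) (n := ι)).toMultilinearMap (s.piecewise a b)
        = ((-1:R[X]) ^ (sᶜ).card * X ^ s.card) *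
          C ((M.submatrix (fun i : ↥(sᶜ) => (i : ι)) (fun i : ↥(sᶜ) => (i : ι))).det) := by
    intro s
    have hpw : s.piecewise a b = fun i => (if i ∈ s then (X:R[X]) else -1) •
        (fun j => if i ∈ s then (if i = j then (1:R[X]) else 0) else C (M i j)) := by
      funext i j
      by_cases h : i ∈ s
      · simp only [Finset.piecewise_eq_of_mem _ _ _ h, Pi.smul_apply, smul_eq_mul, if_pos h, a]
        by_cases h2 : i = j <;> simp [h2]
      · simp only [Finset.piecewise_eq_of_notMem _ _ _ h, Pi.smul_apply, smul_eq_mul, if_neg h, b]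
        ring
    rw [hpw, MultilinearMap.map_smul_univ]
    have hprod : (∏ i, (if i ∈ s then (X:R[X]) else -1)) = X ^ s.card * (-1:R[X]) ^ (sᶜ).card := by
      rw [← Finset.prod_mul_prod_compl s]
      rw [Finset.prod_congr rfl (fun i hi => if_pos hi),
        Finset.prod_congr rfl (fun i hi => if_neg (Finset.mem_compl.mp hi)),
        Finset.prod_const, Finset.prod_const]
    rw [hprod]
    have h1 : ((Matrix.detRowAlternating (R := R[X]) (n := ι)).toMultilinearMap fun i j => if i ∈ s then (if i = j then 1 else 0) else C (M i j))
        = Matrix.det (Matrix.of fun i j => if i ∈ s then (if i = j then (1:R[X]) else 0) else (M.map C) i j) := rfl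
    have : ((M.map C).submatrix (fun i : {x // ¬ x ∈ s} => (i : ι)) (fun i : {x // ¬ x ∈ s} => (i : ι))).det
        = C ((M.submatrix (fun i : ↥(sᶜ) => (i : ι)) (fun i : ↥(sᶜ) => (i : ι))).det) := by
      calc ((M.map C).submatrix (fun i : {x // ¬ x ∈ s} => (i : ι)) (fun i : {x // ¬ x ∈ s} => (i : ι))).det
          = (((M.map C).submatrix (fun i : {x // ¬ x ∈ s} => (i : ι)) (fun i : {x // ¬ x ∈ s} => (i : ι))).submatrix
              (Equiv.subtypeEquivRight (fun x => (Finset.mem_compl (s := s))))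
              (Equiv.subtypeEquivRight (fun x => (Finset.mem_compl (s := s))))).det :=
            (Matrix.det_submatrix_equiv_self _ _).symm
        _ = ((M.submatrix (fun i : ↥(sᶜ) => (i : ι)) (fun i : ↥(sᶜ) => (i : ι))).map C).det := rfl
        _ = C ((M.submatrix (fun i : ↥(sᶜ) => (i : ι)) (fun i : ↥(sᶜ) => (i : ι))).det) :=
            (RingHom.map_det C _).symm
    rw [h1, det_ite_identity_rows s (M.map C), this, smul_eq_mul]
    ring
  rw [Finset.sum_congr rfl (fun s _ => hterm s),
    ← Equiv.sum_comp (Function.Involutive.toPerm _ (compl_involutive : Function.Involutive (compl : Finset ι → Finset ι)))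
      (fun t : Finset ι =>
        (C ((-1:R) ^ t.card * (M.submatrix (fun i : ↥t => (i : ι)) (fun i : ↥t => (i : ι))).det))
          * X ^ (Fintype.card ι - t.card))]
  refine Finset.sum_congr rfl fun s _ => ?_
  have h2 : (Function.Involutive.toPerm _ (compl_involutive : Function.Involutive (compl : Finset ι → Finset ι))) s = sᶜ := rfl
  rw [h2]
  have h3 : Fintype.card ι - (sᶜ).card = s.card := by
    rw [Finset.card_compl, Nat.sub_sub_self (Finset.card_le_univ s)]
  rw [h3, _root_.map_mul, map_pow, map_neg C, _root_.map_one]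
  ring

set_option maxHeartbeats 1000000 in
set_option synthInstance.maxHeartbeats 200000 in
lemma charpoly_map_ratfunc {s : ℕ} (S : Matrix (Fin s) (Fin s) ℝ) :
    algebraMap ℝ[X] (RatFunc ℝ) S.charpoly =
      ((algebraMap ℝ[X] (RatFunc ℝ) X) • (1 : Matrix (Fin s) (Fin s) (RatFunc ℝ))
        - S.map ((algebraMap ℝ[X] (RatFunc ℝ)).comp (C : ℝ →+* ℝ[X]))).det := by
  rw [Matrix.charpoly, RingHom.map_det, RingHom.mapMatrix_apply]
  congr 1
  ext i j
  by_cases hij : i = j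
  · subst hij
    simp [charmatrix_apply_eq, Matrix.map_apply, Matrix.sub_apply, Matrix.smul_apply,
      Matrix.one_apply_eq, smul_eq_mul, mul_one]
  · simp [charmatrix_apply_ne _ _ _ hij, Matrix.map_apply, Matrix.sub_apply, Matrix.smul_apply,
      Matrix.one_apply_ne hij, smul_eq_mul, mul_zero]

set_option maxHeartbeats 1000000 in
set_option synthInstance.maxHeartbeats 200000 in
lemma charpoly_mul_comm_rect {p q : ℕ} (h : q ≤ p)
    (M : Matrix (Fin p) (Fin q) ℝ) (N : Matrix (Fin q) (Fin p) ℝ) :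
    (M * N).charpoly = X ^ (p - q) * (N * M).charpoly := by
  set K := RatFunc ℝ
  set φ := algebraMap ℝ[X] K with hφ
  have hinj : Function.Injective φ := RatFunc.algebraMap_injective ℝ
  apply hinj
  set x : K := φ X with hxdef
  have hx : x ≠ 0 := by
    simp only [hxdef, ne_eq, map_eq_zero_iff φ hinj]
    exact Polynomial.X_ne_zero
  set ψ := φ.comp (C : ℝ →+* ℝ[X]) with hψ
  set M' := M.map ψ
  set N' := N.map ψ
  have key : ∀ (r : ℕ) (Z : Matrix (Fin r) (Fin r) K),
      ((x • (1 : Matrix (Fin r) (Fin r) K)) - Z).det = x ^ r * (1 - x⁻¹ • Z).det := by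
    intro r Z
    have h1 : x • ((1 : Matrix (Fin r) (Fin r) K) - x⁻¹ • Z) = x • 1 - Z := by
      rw [smul_sub, smul_smul, mul_inv_cancel₀ hx, one_smul]
    rw [← h1, Matrix.det_smul, Fintype.card_fin]
  have hbal : ((1 : Matrix (Fin p) (Fin p) K) - x⁻¹ • (M' * N')).det
      = ((1 : Matrix (Fin q) (Fin q) K) - x⁻¹ • (N' * M')).det := by
    rw [← Matrix.smul_mul, Matrix.det_one_sub_mul_comm, Matrix.mul_smul]
  have hmapMN : (M * N).map ψ = M' * N' := Matrix.map_mul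
  have hmapNM : (N * M).map ψ = N' * M' := Matrix.map_mul
  rw [_root_.map_mul, map_pow, charpoly_map_ratfunc, charpoly_map_ratfunc, hmapMN, hmapNM,
    key p (M' * N'), key q (N' * M'), hbal, ← hxdef]
  rw [← mul_assoc, ← pow_add, Nat.sub_add_cancel h]

lemma det_mul_eq_zero_of_card {ι : Type*} [Fintype ι] [DecidableEq ι] {r : ℕ}
    (h : r < Fintype.card ι) (P : Matrix ι (Fin r) ℝ) (Q : Matrix (Fin r) ι ℝ) :
    (P * Q).det = 0 := by
  by_contra hne
  have hu : IsUnit (P * Q) := (Matrix.isUnit_iff_isUnit_det _).mpr (isUnit_iff_ne_zero.mpr hne)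
  have h1 := Matrix.rank_of_isUnit _ hu
  have h2 : (P * Q).rank ≤ r :=
    le_trans (Matrix.rank_mul_le_left P Q)
      (le_trans (Matrix.rank_le_card_width P) (le_of_eq (Fintype.card_fin r)))
  omega

lemma det_minor_gram {ι : Type*} [Fintype ι] [DecidableEq ι] {r : ℕ}
    (V : Matrix ι (Fin r) ℝ) (β : ι → ℝ) (t : Finset ι) :
    ((V * Vᵀ * Matrix.diagonal β).submatrix (fun i : ↥t => (i : ι)) (fun i : ↥t => (i : ι))).det
      = (∏ i ∈ t, β i) *
        ((V.submatrix (fun i : ↥t => (i : ι)) id) *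
          (V.submatrix (fun i : ↥t => (i : ι)) id)ᵀ).det := by
  have h1 : (V * Vᵀ * Matrix.diagonal β).submatrix
        (fun i : ↥t => (i : ι)) (fun i : ↥t => (i : ι))
      = ((V * Vᵀ).submatrix (fun i : ↥t => (i : ι)) (fun i : ↥t => (i : ι)))
          * Matrix.diagonal (fun a : ↥t => β a) := by
    ext a b
    simp only [Matrix.submatrix_apply, Matrix.mul_diagonal]
  have h2 : (V * Vᵀ).submatrix (fun i : ↥t => (i : ι)) (fun i : ↥t => (i : ι))
      = (V.submatrix (fun i : ↥t => (i : ι)) id)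
          * (V.submatrix (fun i : ↥t => (i : ι)) id)ᵀ := by
    rw [Matrix.transpose_submatrix,
      ← Matrix.submatrix_mul_equiv V Vᵀ (fun i : ↥t => (i : ι)) (Equiv.refl (Fin r)) _]
    rfl
  rw [h1, Matrix.det_mul, Matrix.det_diagonal, h2, Finset.prod_coe_sort, mul_comm]

lemma gram_det_zero {ι : Type*} [Fintype ι] [DecidableEq ι] {r : ℕ}
    (V : Matrix ι (Fin r) ℝ) (t : Finset ι) (h : r < t.card) :
    ((V.submatrix (fun i : ↥t => (i : ι)) id) *
      (V.submatrix (fun i : ↥t => (i : ι)) id)ᵀ).det = 0 :=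
  det_mul_eq_zero_of_card (by rwa [Fintype.card_coe]) _ _

lemma sum_finset_by_card {ι : Type*} [Fintype ι] {M₀ : Type*} [AddCommMonoid M₀]
    (g : Finset ι → M₀) :
    ∑ t : Finset ι, g t
      = ∑ k ∈ Finset.range (Fintype.card ι + 1),
          ∑ t ∈ Finset.powersetCard k Finset.univ, g t := by
  classical
  rw [← Finset.powerset_univ, Finset.powerset_card_disjiUnion]
  exact (Finset.sum_disjiUnion _ _ _).trans (by rw [Finset.card_univ])

/-- With `B` the `(n+1) × n` matrix whose `i`-th row is `Aᵢ − A_{n+2}` and `D` the diagonal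
matrix of the `αᵢ` (`1 ≤ i ≤ n+1`), the characteristic polynomial of `BᵀDB` is `f(x)` and
the characteristic polynomial of `BBᵀD` is `x·f(x)`. -/
theorem charpoly_BtDB_and_BBtD {n : ℕ}
    (A : Fin (n + 2) → EuclideanSpace ℝ (Fin n))
    (hgp : InGeneralPosition A)
    (α : Fin (n + 2) → ℝ) (hα : ∀ i, α i ≠ 0)
    (hsum : ∑ i, α i = 0) (hsum2 : ∑ i, α i • A i = 0)
    (B : Matrix (Fin (n + 1)) (Fin n) ℝ)
    (hB : ∀ (i : Fin (n + 1)) (j : Fin n),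
      B i j = A i.castSucc j - A (Fin.last (n + 1)) j)
    (D : Matrix (Fin (n + 1)) (Fin (n + 1)) ℝ)
    (hD : D = Matrix.diagonal (fun i : Fin (n + 1) => α i.castSucc)) :
    Matrix.charpoly (Bᵀ * D * B) = charPolyConfig A α n ∧
    Matrix.charpoly (B * Bᵀ * D) = X * charPolyConfig A α n := by
  classical
  set W : Matrix (Fin (n+2)) (Fin n) ℝ := Matrix.of (fun i j => A i j) with hW
  set Δ : Matrix (Fin (n+2)) (Fin (n+2)) ℝ := Matrix.diagonal α with hΔ
  -- coordinatewise form of hsum2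
  have hsumc : ∀ j, (∑ i, α i * A i j) = 0 := by
    intro j
    have h0 : ((LinearMap.proj j).comp
        (WithLp.linearEquiv 2 ℝ (Fin n → ℝ)).toLinearMap) (∑ i, α i • A i) = 0 := by
      rw [hsum2]; simp
    rw [map_sum] at h0
    simpa using h0
  -- the key identity WᵀΔW = BᵀDB
  have hWB : Wᵀ * Δ * W = Bᵀ * D * B := by
    ext j k
    rw [Matrix.mul_apply, Matrix.mul_apply]
    simp only [Matrix.mul_diagonal, hD, hΔ, hW, Matrix.transpose_apply, Matrix.of_apply, hB]
    set v := A (Fin.last (n + 1)) with hv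
    have e1 : ∀ i : Fin (n+2), α i * (A i j - v j) * (A i k - v k)
        = α i * A i j * A i k - v k * (α i * A i j) - v j * (α i * A i k)
          + (v j * v k) * α i := by intro i; ring
    have hmain : ∑ i : Fin (n+2), α i * (A i j - v j) * (A i k - v k)
        = ∑ i : Fin (n+2), (A i j * α i) * A i k := by
      rw [Finset.sum_congr rfl (fun i _ => e1 i)]
      rw [Finset.sum_add_distrib, Finset.sum_sub_distrib, Finset.sum_sub_distrib,
        ← Finset.mul_sum, ← Finset.mul_sum, ← Finset.mul_sum, hsumc j, hsumc k, hsum]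
      refine Eq.trans (by ring) (Finset.sum_congr rfl fun i _ => by ring)
    rw [← hmain, Fin.sum_univ_castSucc]
    simp only [hv, sub_self, mul_zero, zero_mul, add_zero]
    exact (Finset.sum_congr rfl fun i _ => by ring).symm
  -- minor expansion of charpoly of W Wᵀ Δ
  have hexp : (W * Wᵀ * Δ).charpoly = X ^ 2 * charPolyConfig A α n := by
    rw [charpoly_eq_sum_minors (W * Wᵀ * Δ), sum_finset_by_card]
    simp only [Fintype.card_fin]
    rw [Finset.sum_range_succ, Finset.sum_range_succ]
    have hzero : ∀ k : ℕ, n < k →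
        (∑ t ∈ Finset.powersetCard k (Finset.univ : Finset (Fin (n+2))),
          C ((-1:ℝ)^t.card * ((W * Wᵀ * Δ).submatrix (fun i : ↥t => (i : Fin (n+2)))
            (fun i : ↥t => (i : Fin (n+2)))).det) * X ^ (n + 2 - t.card)) = 0 := by
      intro k hk
      refine Finset.sum_eq_zero fun t ht => ?_
      have htc : t.card = k := (Finset.mem_powersetCard.mp ht).2
      rw [hΔ, det_minor_gram, gram_det_zero W t (by omega), mul_zero, mul_zero,
        map_zero, zero_mul]
    rw [hzero (n+1) (by omega), hzero (n+2) (by omega), add_zero, add_zero]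
    rw [charPolyConfig, Finset.mul_sum]
    refine Finset.sum_congr rfl fun k hk => ?_
    have hk' : k ≤ n := Nat.lt_succ_iff.mp (Finset.mem_range.mp hk)
    rw [cCoeff]
    have hterm : ∀ t ∈ Finset.powersetCard k (Finset.univ : Finset (Fin (n+2))),
        C ((-1:ℝ)^t.card * ((W * Wᵀ * Δ).submatrix (fun i : ↥t => (i : Fin (n+2)))
          (fun i : ↥t => (i : Fin (n+2)))).det) * X ^ (n + 2 - t.card)
        = X ^ 2 * (C ((-1:ℝ)^k * ((∏ i ∈ t, α i) *
            (Matrix.of fun (a b : ↥t) => (inner ℝ (A a.1) (A b.1) : ℝ)).det)) * X ^ (n - k)) := by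
      intro t ht
      have htc : t.card = k := (Finset.mem_powersetCard.mp ht).2
      have hgram : (W.submatrix (fun i : ↥t => (i : Fin (n+2))) id) *
          (W.submatrix (fun i : ↥t => (i : Fin (n+2))) id)ᵀ
          = Matrix.of fun (a b : ↥t) => (inner ℝ (A a.1) (A b.1) : ℝ) := by
        ext a b
        simp [Matrix.mul_apply, PiLp.inner_apply, RCLike.inner_apply, conj_trivial, hW]
        exact Finset.sum_congr rfl fun _ _ => mul_comm _ _
      rw [hΔ, det_minor_gram, hgram, htc]
      have hxp : (X:ℝ[X]) ^ (n + 2 - k) = X ^ 2 * X ^ (n - k) := by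
        rw [← pow_add]; congr 1; omega
      rw [hxp]; ring
    rw [Finset.sum_congr rfl hterm, ← Finset.mul_sum]
    congr 1
    rw [← Finset.sum_mul]
    congr 1
    rw [← map_sum C, ← Finset.mul_sum]
  -- rectangular commutation
  have hr1 := charpoly_mul_comm_rect (show n ≤ n + 2 by omega) W (Wᵀ * Δ)
  have h21 : n + 2 - n = 2 := by omega
  rw [h21, ← Matrix.mul_assoc, hWB] at hr1
  have hfirst : (Bᵀ * D * B).charpoly = charPolyConfig A α n := by
    apply mul_left_cancel₀ (pow_ne_zero 2 (Polynomial.X_ne_zero : (X:ℝ[X]) ≠ 0))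
    rw [← hr1, hexp]
  refine ⟨hfirst, ?_⟩
  have hr2 := charpoly_mul_comm_rect (show n ≤ n + 1 by omega) B (Bᵀ * D)
  have h11 : n + 1 - n = 1 := by omega
  rw [h11, pow_one, ← Matrix.mul_assoc, hfirst] at hr2
  exact hr2
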